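/- Let ⟨X⟩_{β,Ã} denote the Gibbs expectation at inverse temperature β > 0 for the Hamiltonian H̄_hop(Ã)+H̄_int(Ã), and for φ : Λ → (−π,π] let Ã(φ)_{x,y} := φ_x − φ_y. Then for all x ≠ y in Λ, the Cooper-pair correlation averaged over the gauge-equivalence class of Ã = 0 vanishes: ∫ Π_{z∈Λ} (dφ_z / 2π) ⟨a†_{x,↑} a†_{x,↓} a_{y,↓} a_{y,↑}⟩_{β,Ã(φ)} = 0, where each φ_z is integrated over (−π,π]. -/

import Mathlib

open Complex Matrix
open scoped ComplexOrder

namespace PiFlux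

/-- `2*L ≠ 0` when `L ≠ 0`, so that `ZMod (2*L)` is a finite type. -/
instance instNeZero2L (L : ℕ) [NeZero L] : NeZero (2 * L) :=
  ⟨by have := NeZero.ne L; omega⟩

/-- A site of the periodic hypercubic lattice `Λ = {-L+1,…,L}^d` with periodic
boundary conditions: each coordinate is an element of `ZMod (2*L)`. -/
abbrev Site (L d : ℕ) := Fin d → ZMod (2 * L)

/-- The integer value in `{-L+1,…,L}` of a periodic coordinate. -/
def coordVal (L : ℕ) (z : ZMod (2 * L)) : ℤ := (z.val : ℤ) - (L : ℤ) + 1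

/-- The coordinate sum `x⁽¹⁾ + ⋯ + x⁽ᵈ⁾` of a site. -/
def coordSum (L d : ℕ) (x : Site L d) : ℤ := ∑ i, coordVal L (x i)

/-- `x + e_i`, with the periodic identification `L + 1 ≡ -L + 1`. -/
def shift (L d : ℕ) (i : Fin d) (x : Site L d) : Site L d :=
  Function.update x i (x i + 1)

/-- `θ_i(x) := x⁽¹⁾ + ⋯ + x⁽ⁱ⁻¹⁾`, plus `1` if `x⁽ⁱ⁾ = L`  (for the first
direction the sum is empty, so `θ_1(x)` is the indicator of `x⁽¹⁾ = L`). -/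
def theta (L d : ℕ) (i : Fin d) (x : Site L d) : ℤ :=
  (∑ k ∈ Finset.univ.filter (fun k => k < i), coordVal L (x k))
    + (if coordVal L (x i) = (L : ℤ) then 1 else 0)

/-- A classical U(1) gauge field: the real number `Ã_{x,x+e_i}` attached to the
positively oriented bond from `x` to `x + e_i`; the value on the reversed bond
is `Ã_{x+e_i,x} = -Ã_{x,x+e_i}`. -/
abbrev Gauge (L d : ℕ) := Site L d → Fin d → ℝ

/-- The canonical anticommutation relations for the fermion operators
`a x σ` (with `σ : Bool`; `true` = spin up, `false` = spin down). -/
def CAR {L d : ℕ} {F : Type*} [Fintype F] [DecidableEq F]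
    (a : Site L d → Bool → Matrix F F ℂ) : Prop :=
  (∀ x y σ τ, a x σ * (a y τ)ᴴ + (a y τ)ᴴ * a x σ
      = if x = y ∧ σ = τ then (1 : Matrix F F ℂ) else 0) ∧
  (∀ x y σ τ, a x σ * a y τ + a y τ * a x σ = 0)

variable {F : Type*} [Fintype F] [DecidableEq F]

/-- The gauged BCS interaction Hamiltonian `H̄_int(Ã)` (the `+g` convention),
the sum running over the nearest-neighbour bonds `{x, x+e_i}` of `Λ`. -/
noncomputable def HbarInt (L d : ℕ) [NeZero L] (g : ℝ) (A : Gauge L d)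
    (a : Site L d → Bool → Matrix F F ℂ) : Matrix F F ℂ :=
  (g : ℂ) • ∑ x : Site L d, ∑ i : Fin d,
    (Complex.exp (2 * I * (A x i)) •
        ((a x true)ᴴ * (a x false)ᴴ * a (shift L d i x) false * a (shift L d i x) true)
      + Complex.exp (-(2 * I * (A x i))) •
        ((a (shift L d i x) true)ᴴ * (a (shift L d i x) false)ᴴ * a x false * a x true))

/-- The hopping Hamiltonian `H̄_hop(Ã)` in the π-flux form. -/
noncomputable def HbarHop (L d : ℕ) [NeZero L] (κ : ℝ) (A : Gauge L d)
    (a : Site L d → Bool → Matrix F F ℂ) : Matrix F F ℂ :=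
  (I * (κ : ℂ)) • ∑ σ : Bool, ∑ x : Site L d, ∑ i : Fin d,
    ((-1 : ℂ) ^ (theta L d i x)) •
      (Complex.exp (I * (A x i)) • ((a x σ)ᴴ * a (shift L d i x) σ)
        - Complex.exp (-(I * (A x i))) • ((a (shift L d i x) σ)ᴴ * a x σ))

/-- The spin-`σ` part `H̄_hop,σ(Ã)` of the hopping Hamiltonian. -/
noncomputable def HbarHopSpin (L d : ℕ) [NeZero L] (κ : ℝ) (A : Gauge L d)
    (a : Site L d → Bool → Matrix F F ℂ) (σ : Bool) : Matrix F F ℂ :=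
  (I * (κ : ℂ)) • ∑ x : Site L d, ∑ i : Fin d,
    ((-1 : ℂ) ^ (theta L d i x)) •
      (Complex.exp (I * (A x i)) • ((a x σ)ᴴ * a (shift L d i x) σ)
        - Complex.exp (-(I * (A x i))) • ((a (shift L d i x) σ)ᴴ * a x σ))

/-- The Cooper-pair operator `a†_{x,↑} a†_{x,↓} a_{y,↓} a_{y,↑}`. -/
noncomputable def pairOp (L d : ℕ) (a : Site L d → Bool → Matrix F F ℂ)
    (x y : Site L d) : Matrix F F ℂ :=
  (a x true)ᴴ * (a x false)ᴴ * a y false * a y true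

/-- The Gibbs expectation `⟨X⟩_{β,Ã}` at inverse temperature `β` for the
Hamiltonian `H̄_hop(Ã) + H̄_int(Ã)`. -/
noncomputable def gibbs (L d : ℕ) [NeZero L] (β κ g : ℝ) (A : Gauge L d)
    (a : Site L d → Bool → Matrix F F ℂ) (X : Matrix F F ℂ) : ℂ :=
  Matrix.trace (X * NormedSpace.exp
      ((-(β : ℂ)) • (HbarHop L d κ A a + HbarInt L d g A a)))
    / Matrix.trace (NormedSpace.exp
      ((-(β : ℂ)) • (HbarHop L d κ A a + HbarInt L d g A a)))

/-- The pure-gauge field `Ã_{x,y} = φ_x - φ_y`. -/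
def pureGauge (L d : ℕ) (φ : Site L d → ℝ) : Gauge L d :=
  fun x i => φ x - φ (shift L d i x)

open MeasureTheory
section CARAlgebra

variable {L d : ℕ} {F : Type*} [Fintype F] [DecidableEq F]
variable {a : Site L d → Bool → Matrix F F ℂ}

lemma aa_zero (hCAR : CAR a) (z : Site L d) (σ : Bool) : a z σ * a z σ = 0 := by
  have h2 : (2 : ℂ) • (a z σ * a z σ) = 0 := by rw [two_smul]; exact hCAR.2 z z σ σ
  exact (smul_eq_zero.mp h2).resolve_left (by norm_num)

lemma aHaH_zero (hCAR : CAR a) (z : Site L d) (σ : Bool) :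
    (a z σ)ᴴ * (a z σ)ᴴ = 0 := by
  have h := congrArg Matrix.conjTranspose (aa_zero hCAR z σ)
  simpa [Matrix.conjTranspose_mul] using h

lemma a_aH (hCAR : CAR a) (z y : Site L d) (σ τ : Bool) :
    a z σ * (a y τ)ᴴ = (if z = y ∧ σ = τ then (1 : Matrix F F ℂ) else 0) - (a y τ)ᴴ * a z σ :=
  eq_sub_of_add_eq (hCAR.1 z y σ τ)

lemma aH_a (hCAR : CAR a) (z y : Site L d) (σ τ : Bool) :
    (a y τ)ᴴ * a z σ = (if z = y ∧ σ = τ then (1 : Matrix F F ℂ) else 0) - a z σ * (a y τ)ᴴ :=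
  eq_sub_of_add_eq' (hCAR.1 z y σ τ)

lemma a_a (hCAR : CAR a) (z y : Site L d) (σ τ : Bool) :
    a z σ * a y τ = -(a y τ * a z σ) :=
  eq_neg_of_add_eq_zero_left (hCAR.2 z y σ τ)

lemma aH_aH (hCAR : CAR a) (z y : Site L d) (σ τ : Bool) :
    (a z σ)ᴴ * (a y τ)ᴴ = -((a y τ)ᴴ * (a z σ)ᴴ) := by
  have h := congrArg Matrix.conjTranspose (hCAR.2 y z τ σ)
  simp only [Matrix.conjTranspose_add, Matrix.conjTranspose_mul,
    Matrix.conjTranspose_zero] at h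
  exact eq_neg_of_add_eq_zero_left h

/-- The number operator `n_{x,σ}`. -/
noncomputable def numOp (a : Site L d → Bool → Matrix F F ℂ) (x : Site L d) (σ : Bool) :
    Matrix F F ℂ := (a x σ)ᴴ * a x σ

lemma numOp_idem (hCAR : CAR a) (x : Site L d) (σ : Bool) :
    numOp a x σ * numOp a x σ = numOp a x σ := by
  unfold numOp
  calc (a x σ)ᴴ * a x σ * ((a x σ)ᴴ * a x σ)
      = (a x σ)ᴴ * (a x σ * (a x σ)ᴴ) * a x σ := by noncomm_ring
    _ = (a x σ)ᴴ * ((if x = x ∧ σ = σ then (1 : Matrix F F ℂ) else 0) - (a x σ)ᴴ * a x σ)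
          * a x σ := by rw [a_aH hCAR]
    _ = (a x σ)ᴴ * a x σ - ((a x σ)ᴴ * (a x σ)ᴴ) * (a x σ * a x σ) := by
          rw [if_pos ⟨rfl, rfl⟩]; noncomm_ring
    _ = (a x σ)ᴴ * a x σ := by rw [aHaH_zero hCAR]; simp

lemma a_numOp (hCAR : CAR a) (x : Site L d) (σ : Bool) :
    a x σ * numOp a x σ = a x σ := by
  unfold numOp
  calc a x σ * ((a x σ)ᴴ * a x σ) = (a x σ * (a x σ)ᴴ) * a x σ := by noncomm_ring
    _ = ((if x = x ∧ σ = σ then (1 : Matrix F F ℂ) else 0) - (a x σ)ᴴ * a x σ) * a x σ := by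
          rw [a_aH hCAR]
    _ = a x σ - (a x σ)ᴴ * (a x σ * a x σ) := by rw [if_pos ⟨rfl, rfl⟩]; noncomm_ring
    _ = a x σ := by rw [aa_zero hCAR]; simp

lemma numOp_a (hCAR : CAR a) (x : Site L d) (σ : Bool) :
    numOp a x σ * a x σ = 0 := by
  unfold numOp
  calc (a x σ)ᴴ * a x σ * a x σ = (a x σ)ᴴ * (a x σ * a x σ) := by noncomm_ring
    _ = 0 := by rw [aa_zero hCAR]; simp

lemma aH_numOp (hCAR : CAR a) (x : Site L d) (σ : Bool) :
    (a x σ)ᴴ * numOp a x σ = 0 := by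
  unfold numOp
  calc (a x σ)ᴴ * ((a x σ)ᴴ * a x σ) = ((a x σ)ᴴ * (a x σ)ᴴ) * a x σ := by noncomm_ring
    _ = 0 := by rw [aHaH_zero hCAR]; simp

lemma numOp_aH (hCAR : CAR a) (x : Site L d) (σ : Bool) :
    numOp a x σ * (a x σ)ᴴ = (a x σ)ᴴ := by
  unfold numOp
  calc (a x σ)ᴴ * a x σ * (a x σ)ᴴ = (a x σ)ᴴ * (a x σ * (a x σ)ᴴ) := by noncomm_ring
    _ = (a x σ)ᴴ * ((if x = x ∧ σ = σ then (1 : Matrix F F ℂ) else 0) - (a x σ)ᴴ * a x σ) := by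
          rw [a_aH hCAR]
    _ = (a x σ)ᴴ - ((a x σ)ᴴ * (a x σ)ᴴ) * a x σ := by rw [if_pos ⟨rfl, rfl⟩]; noncomm_ring
    _ = (a x σ)ᴴ := by rw [aHaH_zero hCAR]; simp

lemma a_numOp_comm (hCAR : CAR a) {x z : Site L d} {σ τ : Bool}
    (h : ¬(z = x ∧ τ = σ)) : a z τ * numOp a x σ = numOp a x σ * a z τ := by
  unfold numOp
  have h1 : a z τ * (a x σ)ᴴ = -((a x σ)ᴴ * a z τ) := by
    have := a_aH hCAR z x τ σ
    rw [if_neg h] at this; rw [this]; noncomm_ring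
  have h2 : a z τ * a x σ = -(a x σ * a z τ) := a_a hCAR z x τ σ
  calc a z τ * ((a x σ)ᴴ * a x σ) = (a z τ * (a x σ)ᴴ) * a x σ := by noncomm_ring
    _ = -((a x σ)ᴴ * (a z τ * a x σ)) := by rw [h1]; noncomm_ring
    _ = (a x σ)ᴴ * (a x σ * a z τ) := by rw [h2]; noncomm_ring
    _ = (a x σ)ᴴ * a x σ * a z τ := by noncomm_ring

lemma aH_numOp_comm (hCAR : CAR a) {x z : Site L d} {σ τ : Bool}
    (h : ¬(z = x ∧ τ = σ)) : (a z τ)ᴴ * numOp a x σ = numOp a x σ * (a z τ)ᴴ := by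
  unfold numOp
  have h1 : (a z τ)ᴴ * (a x σ)ᴴ = -((a x σ)ᴴ * (a z τ)ᴴ) := aH_aH hCAR z x τ σ
  have h2 : (a z τ)ᴴ * a x σ = -(a x σ * (a z τ)ᴴ) := by
    have := aH_a hCAR x z σ τ
    rw [if_neg (fun hh => h ⟨hh.1.symm, hh.2.symm⟩)] at this
    rw [this]; noncomm_ring
  calc (a z τ)ᴴ * ((a x σ)ᴴ * a x σ) = ((a z τ)ᴴ * (a x σ)ᴴ) * a x σ := by noncomm_ring
    _ = -((a x σ)ᴴ * ((a z τ)ᴴ * a x σ)) := by rw [h1]; noncomm_ring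
    _ = (a x σ)ᴴ * (a x σ * (a z τ)ᴴ) := by rw [h2]; noncomm_ring
    _ = (a x σ)ᴴ * a x σ * (a z τ)ᴴ := by noncomm_ring

end CARAlgebra
set_option linter.unusedSectionVars false

section GaugeUnitary

variable {L d : ℕ} {F : Type*} [Fintype F] [DecidableEq F]
variable {a : Site L d → Bool → Matrix F F ℂ}

/-- One spin factor of the local gauge unitary `e^{i(π/2) n_{x,σ}}`. -/
noncomputable def Ufac (a : Site L d → Bool → Matrix F F ℂ) (x : Site L d) (σ : Bool) :
    Matrix F F ℂ := 1 + (Complex.I - 1) • numOp a x σ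

/-- One spin factor of the inverse gauge unitary. -/
noncomputable def Vfac (a : Site L d → Bool → Matrix F F ℂ) (x : Site L d) (σ : Bool) :
    Matrix F F ℂ := 1 + (-Complex.I - 1) • numOp a x σ

/-- The local gauge unitary `U = e^{i(π/2)(n_{x,↑}+n_{x,↓})}`. -/
noncomputable def Umat (a : Site L d → Bool → Matrix F F ℂ) (x : Site L d) :
    Matrix F F ℂ := Ufac a x true * Ufac a x false

/-- The inverse local gauge unitary. -/
noncomputable def Vmat (a : Site L d → Bool → Matrix F F ℂ) (x : Site L d) :
    Matrix F F ℂ := Vfac a x false * Vfac a x true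

lemma Ufac_mul_Vfac (hCAR : CAR a) (x : Site L d) (σ : Bool) :
    Ufac a x σ * Vfac a x σ = 1 := by
  unfold Ufac Vfac
  simp only [mul_add, add_mul, one_mul, mul_one, smul_mul_smul_comm]
  rw [numOp_idem hCAR]
  have h2 : ((Complex.I - 1) * (-Complex.I - 1)) = 2 := by linear_combination -Complex.I_sq
  rw [h2]
  module

lemma Vfac_mul_Ufac (hCAR : CAR a) (x : Site L d) (σ : Bool) :
    Vfac a x σ * Ufac a x σ = 1 := by
  unfold Ufac Vfac
  simp only [mul_add, add_mul, one_mul, mul_one, smul_mul_smul_comm]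
  rw [numOp_idem hCAR]
  have h2 : ((-Complex.I - 1) * (Complex.I - 1)) = 2 := by linear_combination -Complex.I_sq
  rw [h2]
  module

lemma Ufac_a_Vfac (hCAR : CAR a) (x : Site L d) (σ : Bool) :
    Ufac a x σ * a x σ * Vfac a x σ = (-Complex.I) • a x σ := by
  have h1 : Ufac a x σ * a x σ = a x σ := by
    unfold Ufac
    rw [add_mul, one_mul, smul_mul_assoc, numOp_a hCAR, smul_zero, add_zero]
  rw [h1]
  unfold Vfac
  rw [mul_add, mul_one, mul_smul_comm, a_numOp hCAR]
  module

lemma Ufac_aH_Vfac (hCAR : CAR a) (x : Site L d) (σ : Bool) :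
    Ufac a x σ * (a x σ)ᴴ * Vfac a x σ = Complex.I • (a x σ)ᴴ := by
  have h1 : Ufac a x σ * (a x σ)ᴴ = Complex.I • (a x σ)ᴴ := by
    unfold Ufac
    rw [add_mul, one_mul, smul_mul_assoc, numOp_aH hCAR]
    module
  rw [h1, smul_mul_assoc]
  unfold Vfac
  rw [mul_add, mul_one, mul_smul_comm, aH_numOp hCAR, smul_zero, add_zero]

lemma Ufac_a_comm (hCAR : CAR a) {x z : Site L d} {σ τ : Bool} (h : ¬(z = x ∧ τ = σ)) :
    Ufac a x σ * a z τ = a z τ * Ufac a x σ := by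
  unfold Ufac
  rw [add_mul, mul_add, one_mul, mul_one, smul_mul_assoc, mul_smul_comm,
    a_numOp_comm hCAR h]

lemma Ufac_aH_comm (hCAR : CAR a) {x z : Site L d} {σ τ : Bool} (h : ¬(z = x ∧ τ = σ)) :
    Ufac a x σ * (a z τ)ᴴ = (a z τ)ᴴ * Ufac a x σ := by
  unfold Ufac
  rw [add_mul, mul_add, one_mul, mul_one, smul_mul_assoc, mul_smul_comm,
    aH_numOp_comm hCAR h]

lemma Ufac_a_Vfac_other (hCAR : CAR a) {x z : Site L d} {σ τ : Bool}
    (h : ¬(z = x ∧ τ = σ)) : Ufac a x σ * a z τ * Vfac a x σ = a z τ := by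
  rw [Ufac_a_comm hCAR h, mul_assoc, Ufac_mul_Vfac hCAR, mul_one]

lemma Ufac_aH_Vfac_other (hCAR : CAR a) {x z : Site L d} {σ τ : Bool}
    (h : ¬(z = x ∧ τ = σ)) : Ufac a x σ * (a z τ)ᴴ * Vfac a x σ = (a z τ)ᴴ := by
  rw [Ufac_aH_comm hCAR h, mul_assoc, Ufac_mul_Vfac hCAR, mul_one]

lemma Umat_mul_Vmat (hCAR : CAR a) (x : Site L d) : Umat a x * Vmat a x = 1 := by
  unfold Umat Vmat
  calc Ufac a x true * Ufac a x false * (Vfac a x false * Vfac a x true)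
      = Ufac a x true * (Ufac a x false * Vfac a x false) * Vfac a x true := by noncomm_ring
    _ = 1 := by rw [Ufac_mul_Vfac hCAR, mul_one, Ufac_mul_Vfac hCAR]

lemma Vmat_mul_Umat (hCAR : CAR a) (x : Site L d) : Vmat a x * Umat a x = 1 := by
  unfold Umat Vmat
  calc Vfac a x false * Vfac a x true * (Ufac a x true * Ufac a x false)
      = Vfac a x false * (Vfac a x true * Ufac a x true) * Ufac a x false := by noncomm_ring
    _ = 1 := by rw [Vfac_mul_Ufac hCAR, mul_one, Vfac_mul_Ufac hCAR]

lemma sandwich {U1 U2 M V2 V1 M' : Matrix F F ℂ} (h : U2 * M * V2 = M') :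
    (U1 * U2) * M * (V2 * V1) = U1 * M' * V1 := by
  rw [← h]; noncomm_ring

lemma U_a_V (hCAR : CAR a) (x z : Site L d) (τ : Bool) :
    Umat a x * a z τ * Vmat a x = (if z = x then -Complex.I else 1) • a z τ := by
  unfold Umat Vmat
  by_cases hz : z = x
  · subst hz
    cases τ
    · -- τ = false : inner pair conjugates, outer pair commutes
      rw [sandwich (Ufac_a_Vfac hCAR z false), mul_smul_comm, smul_mul_assoc,
        Ufac_a_Vfac_other hCAR (by simp), if_pos rfl]
    · -- τ = true : inner pair commutes, outer conjugates
      rw [sandwich (Ufac_a_Vfac_other hCAR (by simp)), Ufac_a_Vfac hCAR, if_pos rfl]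
  · rw [sandwich (Ufac_a_Vfac_other hCAR (by tauto)),
      Ufac_a_Vfac_other hCAR (by tauto), if_neg hz, one_smul]

lemma U_aH_V (hCAR : CAR a) (x z : Site L d) (τ : Bool) :
    Umat a x * (a z τ)ᴴ * Vmat a x = (if z = x then Complex.I else 1) • (a z τ)ᴴ := by
  unfold Umat Vmat
  by_cases hz : z = x
  · subst hz
    cases τ
    · rw [sandwich (Ufac_aH_Vfac hCAR z false), mul_smul_comm, smul_mul_assoc,
        Ufac_aH_Vfac_other hCAR (by simp), if_pos rfl]
    · rw [sandwich (Ufac_aH_Vfac_other hCAR (by simp)), Ufac_aH_Vfac hCAR, if_pos rfl]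
  · rw [sandwich (Ufac_aH_Vfac_other hCAR (by tauto)),
      Ufac_aH_Vfac_other hCAR (by tauto), if_neg hz, one_smul]

lemma conj_smul (U V M : Matrix F F ℂ) (c : ℂ) : U * (c • M) * V = c • (U * M * V) := by
  rw [mul_smul_comm, smul_mul_assoc]

lemma conj_zsmul (U V M : Matrix F F ℂ) (c : ℂ) (n : ℤ) :
    U * ((c ^ n) • M) * V = (c ^ n) • (U * M * V) := conj_smul U V M _

lemma conj_sum {ι : Type*} (U V : Matrix F F ℂ) (s : Finset ι) (f : ι → Matrix F F ℂ) :
    U * (∑ i ∈ s, f i) * V = ∑ i ∈ s, U * f i * V := by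
  rw [Finset.mul_sum, Finset.sum_mul]

lemma conj_sub (U V M N : Matrix F F ℂ) : U * (M - N) * V = U * M * V - U * N * V := by
  noncomm_ring

lemma conj_add (U V M N : Matrix F F ℂ) : U * (M + N) * V = U * M * V + U * N * V := by
  noncomm_ring

lemma conj_mul {U V : Matrix F F ℂ} (hVU : V * U = 1) (M N : Matrix F F ℂ) :
    U * (M * N) * V = (U * M * V) * (U * N * V) := by
  have h : (U * M * V) * (U * N * V) = U * (M * (V * U) * N) * V := by noncomm_ring
  rw [h, hVU, mul_one]

end GaugeUnitary
section GaugeShift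

variable {L d : ℕ} {F : Type*} [Fintype F] [DecidableEq F]
variable {a : Site L d → Bool → Matrix F F ℂ}

lemma pureGauge_update (x : Site L d) (φ : Site L d → ℝ) (t : ℝ) (z : Site L d) (i : Fin d) :
    pureGauge L d (Function.update φ x (φ x + t)) z i
      = pureGauge L d φ z i + (if z = x then t else 0)
          - (if shift L d i z = x then t else 0) := by
  have h1 : ∀ w, Function.update φ x (φ x + t) w = φ w + (if w = x then t else 0) := by
    intro w
    rw [Function.update_apply]
    split_ifs with h
    · rw [h]
    · ring
  unfold pureGauge
  rw [h1, h1]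
  ring

lemma exp_pureGauge_update (x : Site L d) (φ : Site L d → ℝ) (t : ℝ) (c : ℂ)
    (z : Site L d) (i : Fin d) :
    Complex.exp (c * (pureGauge L d (Function.update φ x (φ x + t)) z i : ℝ))
      = ((if z = x then Complex.exp (c * t) else 1)
          * (if shift L d i z = x then Complex.exp (c * t) else 1)⁻¹)
          * Complex.exp (c * (pureGauge L d φ z i : ℝ)) := by
  have h1 : (c * ((pureGauge L d (Function.update φ x (φ x + t)) z i : ℝ) : ℂ))
      = (c * (pureGauge L d φ z i : ℝ) + (if z = x then c * t else 0))
        - (if shift L d i z = x then c * t else 0) := by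
    rw [pureGauge_update]
    split_ifs <;> push_cast <;> ring
  rw [h1, Complex.exp_sub, Complex.exp_add,
    apply_ite Complex.exp, apply_ite Complex.exp, Complex.exp_zero, div_eq_mul_inv]
  ring

variable [NeZero L]

lemma U_HbarHop_V (hCAR : CAR a) (κ : ℝ) (x : Site L d) (φ : Site L d → ℝ) (t : ℝ)
    (ht : Complex.exp (Complex.I * t) = Complex.I) :
    Umat a x * HbarHop L d κ (pureGauge L d φ) a * Vmat a x
      = HbarHop L d κ (pureGauge L d (Function.update φ x (φ x + t))) a := by
  have hVU := Vmat_mul_Umat hCAR x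
  have hmt : Complex.exp ((-Complex.I) * t) = -Complex.I := by
    rw [neg_mul, Complex.exp_neg, ht, Complex.inv_I]
  unfold HbarHop
  rw [conj_smul]
  congr 1
  rw [conj_sum]; refine Finset.sum_congr rfl fun σ _ => ?_
  rw [conj_sum]; refine Finset.sum_congr rfl fun z _ => ?_
  rw [conj_sum]; refine Finset.sum_congr rfl fun i _ => ?_
  rw [conj_smul]
  congr 1
  rw [conj_sub, conj_smul, conj_smul, conj_mul hVU, conj_mul hVU,
    U_aH_V hCAR, U_a_V hCAR, U_aH_V hCAR, U_a_V hCAR]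
  simp only [smul_mul_assoc, mul_smul_comm, smul_smul]
  congr 1
  · rw [exp_pureGauge_update x φ t Complex.I z i, ht]
    congr 1
    split_ifs <;>
      (try simp only [inv_neg, Complex.inv_I, inv_one, inv_neg_one]) <;>
      (try ring_nf) <;>
      (try simp only [Complex.I_sq, Complex.I_pow_four, inv_neg, Complex.inv_I, inv_one, inv_neg_one, neg_neg,
        mul_neg, neg_mul, mul_one, one_mul]) <;>
      (first | rfl | ring1)
  · rw [show -(Complex.I * ((pureGauge L d (Function.update φ x (φ x + t)) z i : ℝ) : ℂ))
        = (-Complex.I) * ((pureGauge L d (Function.update φ x (φ x + t)) z i : ℝ) : ℂ)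
        by ring,
      show -(Complex.I * ((pureGauge L d φ z i : ℝ) : ℂ))
        = (-Complex.I) * ((pureGauge L d φ z i : ℝ) : ℂ) by ring,
      exp_pureGauge_update x φ t (-Complex.I) z i, hmt]
    congr 1
    split_ifs <;>
      (try simp only [inv_neg, Complex.inv_I, inv_one, inv_neg_one]) <;>
      (try ring_nf) <;>
      (try simp only [Complex.I_sq, Complex.I_pow_four, inv_neg, Complex.inv_I, inv_one, inv_neg_one, neg_neg,
        mul_neg, neg_mul, mul_one, one_mul]) <;>
      (first | rfl | ring1)

lemma U_HbarInt_V (hCAR : CAR a) (g : ℝ) (x : Site L d) (φ : Site L d → ℝ) (t : ℝ)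
    (ht : Complex.exp (Complex.I * t) = Complex.I) :
    Umat a x * HbarInt L d g (pureGauge L d φ) a * Vmat a x
      = HbarInt L d g (pureGauge L d (Function.update φ x (φ x + t))) a := by
  have hVU := Vmat_mul_Umat hCAR x
  have h2t : Complex.exp ((2 * Complex.I) * t) = -1 := by
    rw [show (2 * Complex.I) * (t : ℂ) = Complex.I * t + Complex.I * t by ring,
      Complex.exp_add, ht, Complex.I_mul_I]
  have hm2t : Complex.exp ((-(2 * Complex.I)) * t) = -1 := by
    rw [neg_mul, Complex.exp_neg, h2t]
    norm_num
  unfold HbarInt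
  rw [conj_smul]
  congr 1
  rw [conj_sum]; refine Finset.sum_congr rfl fun z _ => ?_
  rw [conj_sum]; refine Finset.sum_congr rfl fun i _ => ?_
  rw [conj_add, conj_smul, conj_smul, conj_mul hVU, conj_mul hVU, conj_mul hVU,
    conj_mul hVU, conj_mul hVU, conj_mul hVU,
    U_aH_V hCAR, U_aH_V hCAR, U_a_V hCAR, U_a_V hCAR,
    U_aH_V hCAR, U_aH_V hCAR, U_a_V hCAR, U_a_V hCAR]
  simp only [smul_mul_assoc, mul_smul_comm, smul_smul]
  congr 1
  · rw [show (2 * Complex.I * ((pureGauge L d (Function.update φ x (φ x + t)) z i : ℝ) : ℂ))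
        = (2 * Complex.I) * ((pureGauge L d (Function.update φ x (φ x + t)) z i : ℝ) : ℂ)
        by ring,
      show (2 * Complex.I * ((pureGauge L d φ z i : ℝ) : ℂ))
        = (2 * Complex.I) * ((pureGauge L d φ z i : ℝ) : ℂ) by ring,
      exp_pureGauge_update x φ t (2 * Complex.I) z i, h2t]
    congr 1
    split_ifs <;>
      (try simp only [inv_neg, Complex.inv_I, inv_one, inv_neg_one]) <;>
      (try ring_nf) <;>
      (try simp only [Complex.I_sq, Complex.I_pow_four, inv_neg, Complex.inv_I, inv_one, inv_neg_one, neg_neg,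
        mul_neg, neg_mul, mul_one, one_mul]) <;>
      (first | rfl | ring1)
  · rw [show -(2 * Complex.I * ((pureGauge L d (Function.update φ x (φ x + t)) z i : ℝ) : ℂ))
        = (-(2 * Complex.I)) * ((pureGauge L d (Function.update φ x (φ x + t)) z i : ℝ) : ℂ)
        by ring,
      show -(2 * Complex.I * ((pureGauge L d φ z i : ℝ) : ℂ))
        = (-(2 * Complex.I)) * ((pureGauge L d φ z i : ℝ) : ℂ) by ring,
      exp_pureGauge_update x φ t (-(2 * Complex.I)) z i, hm2t]
    congr 1
    split_ifs <;>
      (try simp only [inv_neg, Complex.inv_I, inv_one, inv_neg_one]) <;>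
      (try ring_nf) <;>
      (try simp only [Complex.I_sq, Complex.I_pow_four, inv_neg, Complex.inv_I, inv_one, inv_neg_one, neg_neg,
        mul_neg, neg_mul, mul_one, one_mul]) <;>
      (first | rfl | ring1)

end GaugeShift
section Gibbs

variable {L d : ℕ} {F : Type*} [Fintype F] [DecidableEq F]
variable {a : Site L d → Bool → Matrix F F ℂ}

lemma U_pairOp_V (hCAR : CAR a) (x y : Site L d) (hxy : x ≠ y) :
    Umat a x * pairOp L d a x y * Vmat a x = (-1 : ℂ) • pairOp L d a x y := by
  have hVU := Vmat_mul_Umat hCAR x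
  unfold pairOp
  have h1 : (if x = x then Complex.I else 1) = Complex.I := if_pos rfl
  have h2 : (if y = x then -Complex.I else (1 : ℂ)) = 1 := if_neg (Ne.symm hxy)
  rw [conj_mul hVU, conj_mul hVU, conj_mul hVU, U_aH_V hCAR, U_aH_V hCAR,
    U_a_V hCAR, U_a_V hCAR, h1, h2, one_smul, one_smul, smul_mul_smul_comm,
    Complex.I_mul_I, smul_mul_assoc, smul_mul_assoc]

theorem gibbs_update_eq_neg [NeZero L] (hCAR : CAR a)
    (κ g β : ℝ) (x y : Site L d) (hxy : x ≠ y)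
    (φ : Site L d → ℝ) (t : ℝ) (ht : Complex.exp (Complex.I * t) = Complex.I) :
    gibbs L d β κ g (pureGauge L d (Function.update φ x (φ x + t))) a (pairOp L d a x y)
      = - gibbs L d β κ g (pureGauge L d φ) a (pairOp L d a x y) := by
  have hUV := Umat_mul_Vmat hCAR x
  have hVU := Vmat_mul_Umat hCAR x
  set U := Umat a x with hU
  set V := Vmat a x with hV
  set H := HbarHop L d κ (pureGauge L d φ) a + HbarInt L d g (pureGauge L d φ) a with hH
  have hGH : ((-(β : ℂ)) • (HbarHop L d κ (pureGauge L d (Function.update φ x (φ x + t))) a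
      + HbarInt L d g (pureGauge L d (Function.update φ x (φ x + t))) a))
      = U * ((-(β : ℂ)) • H) * V := by
    rw [conj_smul, conj_add, U_HbarHop_V hCAR κ x φ t ht, U_HbarInt_V hCAR g x φ t ht]
  set e := NormedSpace.exp ((-(β : ℂ)) • H) with he
  have hexp : NormedSpace.exp ((-(β : ℂ)) •
      (HbarHop L d κ (pureGauge L d (Function.update φ x (φ x + t))) a
        + HbarInt L d g (pureGauge L d (Function.update φ x (φ x + t))) a)) = U * e * V := by
    rw [hGH]
    exact Matrix.exp_units_conj (⟨U, V, hUV, hVU⟩ : (Matrix F F ℂ)ˣ) _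
  have hden : Matrix.trace (U * e * V) = Matrix.trace e := by
    rw [Matrix.trace_mul_comm (U * e) V, show V * (U * e) = (V * U) * e by noncomm_ring,
      hVU, one_mul]
  have hnum : Matrix.trace (pairOp L d a x y * (U * e * V))
      = - Matrix.trace (pairOp L d a x y * e) := by
    have h1 : pairOp L d a x y * (U * e * V) = (pairOp L d a x y * (U * e)) * V := by
      noncomm_ring
    rw [h1, Matrix.trace_mul_comm, show V * (pairOp L d a x y * (U * e))
      = (V * pairOp L d a x y * U) * e by noncomm_ring]
    have h2 : V * pairOp L d a x y * U = (-1 : ℂ) • pairOp L d a x y := by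
      have h3 : V * (U * pairOp L d a x y * V) * U = pairOp L d a x y := by
        rw [show V * (U * pairOp L d a x y * V) * U
          = (V * U) * pairOp L d a x y * (V * U) by noncomm_ring, hVU, one_mul, mul_one]
      rw [U_pairOp_V hCAR x y hxy] at h3
      have h4 : V * ((-1 : ℂ) • pairOp L d a x y) * U
          = (-1 : ℂ) • (V * pairOp L d a x y * U) := by
        rw [mul_smul_comm, smul_mul_assoc]
      rw [h4] at h3
      calc V * pairOp L d a x y * U
          = (-1 : ℂ) • ((-1 : ℂ) • (V * pairOp L d a x y * U)) := by
            rw [smul_smul]; norm_num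
        _ = (-1 : ℂ) • pairOp L d a x y := by rw [h3]
    rw [h2, smul_mul_assoc, Matrix.trace_smul]
    simp
  unfold gibbs
  rw [hexp, hden, hnum, ← hH, ← he, neg_div]

end Gibbs
section Rotation

open Real

/-- Rotation by `π/2` of the circle `(-π, π]`, extended by the identity. -/
noncomputable def rot (s : ℝ) : ℝ :=
  if -π < s ∧ s ≤ π / 2 then s + π / 2
  else if π / 2 < s ∧ s ≤ π then s - 3 * π / 2
  else s

/-- The inverse rotation. -/
noncomputable def rotInv (s : ℝ) : ℝ :=
  if -π / 2 < s ∧ s ≤ π then s - π / 2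
  else if -π < s ∧ s ≤ -π / 2 then s + 3 * π / 2
  else s

lemma rotInv_rot (s : ℝ) : rotInv (rot s) = s := by
  have hπ := Real.pi_pos
  unfold rot rotInv
  split_ifs <;>
    (try simp only [not_and_or, not_lt, not_le] at *) <;>
    (try casesm* _ ∨ _, _ ∧ _) <;> linarith

lemma rot_rotInv (s : ℝ) : rot (rotInv s) = s := by
  have hπ := Real.pi_pos
  unfold rot rotInv
  split_ifs <;>
    (try simp only [not_and_or, not_lt, not_le] at *) <;>
    (try casesm* _ ∨ _, _ ∧ _) <;> linarith

lemma measurable_rot : Measurable rot := by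
  unfold rot
  have hs1 : MeasurableSet {s : ℝ | -π < s ∧ s ≤ π / 2} := by
    simpa [Set.Ioc] using (measurableSet_Ioc (a := -π) (b := π / 2))
  have hs2 : MeasurableSet {s : ℝ | π / 2 < s ∧ s ≤ π} := by
    simpa [Set.Ioc] using (measurableSet_Ioc (a := π / 2) (b := π))
  exact Measurable.ite hs1 (measurable_id.add_const _)
    (Measurable.ite hs2 (measurable_id.sub_const _) measurable_id)

lemma measurable_rotInv : Measurable rotInv := by
  unfold rotInv
  have hs1 : MeasurableSet {s : ℝ | -π / 2 < s ∧ s ≤ π} := by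
    simpa [Set.Ioc] using (measurableSet_Ioc (a := -π / 2) (b := π))
  have hs2 : MeasurableSet {s : ℝ | -π < s ∧ s ≤ -π / 2} := by
    simpa [Set.Ioc] using (measurableSet_Ioc (a := -π) (b := -π / 2))
  exact Measurable.ite hs1 (measurable_id.sub_const _)
    (Measurable.ite hs2 (measurable_id.add_const _) measurable_id)

/-- The rotation as a measurable equivalence of `ℝ`. -/
noncomputable def rotMEquiv : ℝ ≃ᵐ ℝ where
  toFun := rot
  invFun := rotInv
  left_inv := rotInv_rot
  right_inv := rot_rotInv
  measurable_toFun := measurable_rot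
  measurable_invFun := measurable_rotInv

lemma rot_measurePreserving :
    MeasureTheory.MeasurePreserving rot
      (MeasureTheory.volume.restrict (Set.Ioc (-π) π))
      (MeasureTheory.volume.restrict (Set.Ioc (-π) π)) := by
  have hπ := Real.pi_pos
  refine ⟨measurable_rot, ?_⟩
  have hsplit : Set.Ioc (-π) π = Set.Ioc (-π) (π / 2) ∪ Set.Ioc (π / 2) π :=
    (Set.Ioc_union_Ioc_eq_Ioc (by linarith) (by linarith)).symm
  have hdisj : Disjoint (Set.Ioc (-π) (π / 2)) (Set.Ioc (π / 2) π) := by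
    rw [Set.Ioc_disjoint_Ioc]
    simp
  rw [hsplit, MeasureTheory.Measure.restrict_union hdisj measurableSet_Ioc,
    MeasureTheory.Measure.map_add _ _ measurable_rot]
  have h1 : (MeasureTheory.volume.restrict (Set.Ioc (-π) (π / 2))).map rot
      = MeasureTheory.volume.restrict (Set.Ioc (-π / 2) π) := by
    have he : rot =ᶠ[MeasureTheory.ae (MeasureTheory.volume.restrict (Set.Ioc (-π) (π / 2)))]
        (fun s => s + π / 2) := by
      filter_upwards [MeasureTheory.ae_restrict_mem measurableSet_Ioc] with s hs
      unfold rot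
      rw [if_pos ⟨hs.1, hs.2⟩]
    rw [MeasureTheory.Measure.map_congr he]
    have hp : (fun s : ℝ => s + π / 2) ⁻¹' Set.Ioc (-π / 2) π = Set.Ioc (-π) (π / 2) := by
      rw [Set.preimage_add_const_Ioc]
      congr 1 <;> ring
    have := ((MeasureTheory.measurePreserving_add_right
      (MeasureTheory.volume : MeasureTheory.Measure ℝ) (π / 2)).restrict_preimage
      (s := Set.Ioc (-π / 2) π) measurableSet_Ioc).map_eq
    rwa [hp] at this
  have h2 : (MeasureTheory.volume.restrict (Set.Ioc (π / 2) π)).map rot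
      = MeasureTheory.volume.restrict (Set.Ioc (-π) (-π / 2)) := by
    have he : rot =ᶠ[MeasureTheory.ae (MeasureTheory.volume.restrict (Set.Ioc (π / 2) π))]
        (fun s => s + -(3 * π / 2)) := by
      filter_upwards [MeasureTheory.ae_restrict_mem measurableSet_Ioc] with s hs
      unfold rot
      rw [if_neg (by push_neg; intro _; linarith [hs.1]), if_pos ⟨hs.1, hs.2⟩]
      ring
    rw [MeasureTheory.Measure.map_congr he]
    have hp : (fun s : ℝ => s + -(3 * π / 2)) ⁻¹' Set.Ioc (-π) (-π / 2)
        = Set.Ioc (π / 2) π := by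
      rw [Set.preimage_add_const_Ioc]
      congr 1 <;> ring
    have := ((MeasureTheory.measurePreserving_add_right
      (MeasureTheory.volume : MeasureTheory.Measure ℝ) (-(3 * π / 2))).restrict_preimage
      (s := Set.Ioc (-π) (-π / 2)) measurableSet_Ioc).map_eq
    rwa [hp] at this
  rw [h1, h2]
  have hdisj2 : Disjoint (Set.Ioc (-π) (-π / 2)) (Set.Ioc (-π / 2) π) := by
    rw [Set.Ioc_disjoint_Ioc]
    simp
  rw [add_comm, ← MeasureTheory.Measure.restrict_union hdisj2 measurableSet_Ioc,
    Set.Ioc_union_Ioc_eq_Ioc (by linarith) (by linarith), hsplit,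
    MeasureTheory.Measure.restrict_union hdisj measurableSet_Ioc]

end Rotation
section ExpValues

lemma expI_rot_sub (s : ℝ) (hs : s ∈ Set.Ioc (-Real.pi) Real.pi) :
    Complex.exp (Complex.I * ((rot s - s : ℝ) : ℂ)) = Complex.I := by
  have hπ := Real.pi_pos
  have hhalfexp : Complex.exp (Complex.I * ((Real.pi / 2 : ℝ) : ℂ)) = Complex.I := by
    rw [mul_comm, Complex.exp_mul_I, ← Complex.ofReal_cos, ← Complex.ofReal_sin,
      Real.cos_pi_div_two, Real.sin_pi_div_two]
    simp
  by_cases hhalf : s ≤ Real.pi / 2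
  · have hr : rot s - s = Real.pi / 2 := by
      unfold rot
      rw [if_pos ⟨hs.1, hhalf⟩]
      ring
    rw [hr, hhalfexp]
  · have hr : rot s - s = -(3 * Real.pi / 2) := by
      unfold rot
      rw [if_neg (by push_neg; intro _; linarith), if_pos ⟨lt_of_not_ge hhalf, hs.2⟩]
      ring
    rw [hr, show Complex.I * ((-(3 * Real.pi / 2) : ℝ) : ℂ)
        = Complex.I * ((Real.pi / 2 : ℝ) : ℂ) - 2 * (Real.pi : ℂ) * Complex.I by
        push_cast; ring,
      Complex.exp_sub, Complex.exp_two_pi_mul_I, div_one, hhalfexp]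

end ExpValues
/-- The Cooper-pair correlation averaged over the
gauge-equivalence class of `Ã = 0` vanishes for `x ≠ y`:
`∫ Π_z (dφ_z/2π) ⟨a†_{x,↑}a†_{x,↓}a_{y,↓}a_{y,↑}⟩_{β,Ã(φ)} = 0`,
each `φ_z` being integrated over `(-π, π]`. -/
theorem averaged_cooper_pair_correlation_vanishes (L d : ℕ) [NeZero L] (hd : 3 ≤ d)
    {F : Type*} [Fintype F] [DecidableEq F]
    (a : Site L d → Bool → Matrix F F ℂ) (hCAR : CAR a)
    (hcard : Fintype.card F = 2 ^ (2 * Fintype.card (Site L d)))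
    (κ g : ℝ) (hg : 0 ≤ g) (β : ℝ) (hβ : 0 < β)
    (x y : Site L d) (hxy : x ≠ y) :
    ∫ φ : Site L d → ℝ,
        (∏ _z : Site L d, (1 / (2 * (Real.pi : ℂ)))) *
          gibbs L d β κ g (pureGauge L d φ) a (pairOp L d a x y)
      ∂(Measure.pi fun _ : Site L d =>
          volume.restrict (Set.Ioc (-Real.pi) Real.pi)) = 0 := by
  classical
  set S := Set.Ioc (-Real.pi) Real.pi with hS
  set μ := (Measure.pi fun _ : Site L d => volume.restrict S) with hμ
  set f : (Site L d → ℝ) → ℂ := fun φ =>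
    (∏ _z : Site L d, (1 / (2 * (Real.pi : ℂ)))) *
      gibbs L d β κ g (pureGauge L d φ) a (pairOp L d a x y) with hf
  show ∫ φ, f φ ∂μ = 0
  set e : Site L d → (ℝ ≃ᵐ ℝ) :=
    fun z => if z = x then rotMEquiv else MeasurableEquiv.refl ℝ with he
  set T := MeasurableEquiv.piCongrRight e with hT
  have hTapp : ∀ (φ : Site L d → ℝ) (z : Site L d), T φ z = e z (φ z) := fun φ z => rfl
  have hMP : MeasurePreserving (⇑T) μ μ := by
    have h := measurePreserving_pi (fun _ : Site L d => volume.restrict S)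
      (fun _ : Site L d => volume.restrict S) (f := fun z s => e z s)
      (fun z => ?_)
    · exact h
    · by_cases hz : z = x
      · simp only [he, hz, if_true, ↓reduceIte]; exact rot_measurePreserving
      · simp only [he, hz, if_false, ↓reduceIte]; exact MeasurePreserving.id (volume.restrict S)
  have hcomp : ∫ φ, f (T φ) ∂μ = ∫ φ, f φ ∂μ := hMP.integral_comp' f
  have hae : ∀ᵐ φ ∂μ, φ x ∈ S := by
    have h0 : (volume.restrict S) Sᶜ = 0 := by
      rw [Measure.restrict_apply measurableSet_Ioc.compl]
      rw [Set.compl_inter_self, measure_empty]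
    have h1 : μ {φ : Site L d → ℝ | ¬ φ x ∈ S} = 0 := by
      have hset : {φ : Site L d → ℝ | ¬ φ x ∈ S} = Function.eval x ⁻¹' Sᶜ := rfl
      rw [hset, hμ]
      exact Measure.pi_eval_preimage_null _ h0
    exact ae_iff.2 h1
  have hneg : ∫ φ, f (T φ) ∂μ = ∫ φ, (-(f φ)) ∂μ := by
    refine integral_congr_ae ?_
    filter_upwards [hae] with φ hφ
    have hTφ : T φ = Function.update φ x (φ x + (rot (φ x) - φ x)) := by
      funext z
      rw [hTapp, Function.update_apply]
      by_cases hz : z = x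
      · subst hz
        simp only [he, if_pos rfl]
        show rot (φ z) = φ z + (rot (φ z) - φ z)
        ring
      · simp only [he, if_neg hz]
        rfl
    have hg := gibbs_update_eq_neg hCAR κ g β x y hxy φ (rot (φ x) - φ x)
      (expI_rot_sub (φ x) hφ)
    rw [hf]
    simp only
    rw [hTφ, hg]
    ring
  have hkey : ∫ φ, f φ ∂μ = - ∫ φ, f φ ∂μ := by
    conv_lhs => rw [← hcomp]
    rw [hneg, integral_neg]
  linear_combination hkey / 2

end PiFlux
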